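/- Let x > 0, let δ be a real number with x|δ| < log 2, and let x̂ = x(1+δ). Then for U(x) = cosh(x) − sinh(x)/x with x ≥ 3, we have |U(x̂) − U(x)| / U(x) ≤ 3 x |δ|. -/

import Mathlib

open Real

/-- `U(x) = cosh x - sinh x / x`. -/
noncomputable def radeU (x : ℝ) : ℝ := Real.cosh x - Real.sinh x / x

theorem radeU_relative_error (x δ : ℝ) (hx : 3 ≤ x) (hδ : x * |δ| < Real.log 2) :
    |radeU (x * (1 + δ)) - radeU x| / radeU x ≤ 3 * x * |δ| := by
  have hL0 : (0:ℝ) < Real.log 2 := Real.log_pos (by norm_num)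
  have hL1 : Real.log 2 < 1 := by
    have := Real.log_two_lt_d9; linarith
  have hx0 : (0:ℝ) < x := by linarith
  have habs : (0:ℝ) ≤ |δ| := abs_nonneg δ
  set M := x * (1 + |δ|) with hM
  set s : Set ℝ := Set.Icc (x - Real.log 2) M with hs
  have hxs : x ∈ s := by
    constructor
    · linarith
    · nlinarith
  have hys : x * (1 + δ) ∈ s := by
    constructor
    · have h1 : -|δ| ≤ δ := neg_abs_le δ
      nlinarith
    · have h1 : δ ≤ |δ| := le_abs_self δ
      nlinarith
  have ht2 : ∀ t ∈ s, (2:ℝ) ≤ t := by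
    intro t ht
    have := ht.1
    linarith
  set D : ℝ → ℝ := fun t => Real.sinh t - (Real.cosh t * t - Real.sinh t * 1) / t ^ 2
    with hD
  have hderiv : ∀ t ∈ s, HasDerivWithinAt radeU (D t) s t := by
    intro t ht
    have ht0 : t ≠ 0 := by have := ht2 t ht; linarith
    have h1 : HasDerivAt Real.cosh (Real.sinh t) t := Real.hasDerivAt_cosh t
    have h2 : HasDerivAt (fun u => Real.sinh u / u)
        ((Real.cosh t * t - Real.sinh t * 1) / t ^ 2) t :=
      (Real.hasDerivAt_sinh t).div (hasDerivAt_id t) ht0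
    exact ((h1.sub h2).hasDerivWithinAt)
  have hbound : ∀ t ∈ s, ‖D t‖ ≤ Real.exp x := by
    intro t ht
    have h2t := ht2 t ht
    have htM : t ≤ M := ht.2
    have ht0 : (0:ℝ) < t := by linarith
    have hsc : Real.sinh t < Real.cosh t := Real.sinh_lt_cosh t
    have hch : (0:ℝ) < Real.cosh t := Real.cosh_pos t
    have hsh : (0:ℝ) < Real.sinh t := Real.sinh_pos_iff.2 ht0
    have hnum : (0:ℝ) ≤ Real.cosh t * t - Real.sinh t * 1 := by nlinarith
    have ht2sq : (0:ℝ) < t ^ 2 := by positivity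
    have hupper : D t ≤ Real.sinh t := by
      have : 0 ≤ (Real.cosh t * t - Real.sinh t * 1) / t ^ 2 := by positivity
      simp only [hD]; linarith
    have hsinh_le : Real.sinh t ≤ Real.exp x := by
      have h1 : Real.sinh t = (Real.exp t - Real.exp (-t)) / 2 := Real.sinh_eq t
      have h2 : Real.exp t ≤ Real.exp M := Real.exp_le_exp.2 htM
      have h3 : Real.exp M = Real.exp x * Real.exp (x * |δ|) := by
        rw [← Real.exp_add]; ring_nf; rw [hM]; ring_nf
      have h4 : Real.exp (x * |δ|) < 2 := by
        calc Real.exp (x * |δ|) < Real.exp (Real.log 2) := Real.exp_lt_exp.2 hδ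
        _ = 2 := Real.exp_log (by norm_num)
      have h5 : 0 < Real.exp (-t) := Real.exp_pos _
      have h6 : 0 < Real.exp x := Real.exp_pos _
      nlinarith
    have hlower : 0 ≤ D t := by
      -- D t = sinh t - cosh t / t + sinh t / t^2 ≥ sinh t - cosh t / 2 ≥ 0
      have key : Real.cosh t * t - Real.sinh t * 1 ≤ Real.sinh t * t ^ 2 := by
        -- suffices cosh t ≤ 2 sinh t (since t ≥ 2): cosh t * t ≤ 2 sinh t * t ≤ sinh t * t^2 + sinh t
        have hc2s : Real.cosh t ≤ 2 * Real.sinh t := by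
          have h1 : Real.cosh t = (Real.exp t + Real.exp (-t)) / 2 := Real.cosh_eq t
          have h2 : Real.sinh t = (Real.exp t - Real.exp (-t)) / 2 := Real.sinh_eq t
          have h3 : (3:ℝ) ≤ Real.exp t := by
            have := Real.add_one_le_exp t; linarith
          have h4 : Real.exp (-t) ≤ 1 := by
            rw [Real.exp_le_one_iff]; linarith
          have h5 : 0 < Real.exp (-t) := Real.exp_pos _
          -- cosh - 2 sinh = (3 e^{-t} - e^t)/2 ≤ 0
          nlinarith
        nlinarith
      have : (Real.cosh t * t - Real.sinh t * 1) / t ^ 2 ≤ Real.sinh t := by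
        rw [div_le_iff₀ ht2sq]; linarith [key]
      simp only [hD]; linarith
    rw [Real.norm_eq_abs, abs_le]
    constructor
    · have := Real.exp_pos x; linarith
    · linarith
  have key := (convex_Icc (x - Real.log 2) M).norm_image_sub_le_of_norm_hasDerivWithin_le
    hderiv hbound hxs hys
  have hnorm : ‖x * (1 + δ) - x‖ = x * |δ| := by
    rw [Real.norm_eq_abs]
    have : x * (1 + δ) - x = x * δ := by ring
    rw [this, abs_mul, abs_of_pos hx0]
  rw [hnorm] at key
  -- radeU positivity and exp x ≤ 3 * radeU x
  have hU3 : Real.exp x ≤ 3 * radeU x := by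
    unfold radeU
    have hsh : (0:ℝ) < Real.sinh x := Real.sinh_pos_iff.2 hx0
    have hdiv : Real.sinh x / x ≤ Real.sinh x / 3 :=
      div_le_div_of_nonneg_left hsh.le (by norm_num) hx
    have h1 : Real.cosh x = (Real.exp x + Real.exp (-x)) / 2 := Real.cosh_eq x
    have h2 : Real.sinh x = (Real.exp x - Real.exp (-x)) / 2 := Real.sinh_eq x
    have h5 : 0 < Real.exp (-x) := Real.exp_pos _
    nlinarith
  have hU0 : 0 < radeU x := by
    have := Real.exp_pos x; linarith
  rw [div_le_iff₀ hU0]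
  calc |radeU (x * (1 + δ)) - radeU x| ≤ Real.exp x * (x * |δ|) := key
    _ ≤ (3 * radeU x) * (x * |δ|) := by
        apply mul_le_mul_of_nonneg_right hU3 (by positivity)
    _ = 3 * x * |δ| * radeU x := by ring
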